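/- arXiv:2403.18753 — 2 statements merged into one kernel-verified Lean document; each statement's English description precedes it below -/
import Mathlib

section
/- Let 𝔉 be a convex compact set of density matrices on ℂ^d and ρ a density matrix with ρ ∉ 𝔉. Then for every temperature T > 0 there exists a positive semidefinite Hamiltonian H ≥ 0 such that Δ(ρ,H) > max_{η ∈ 𝔉} Δ(η,H), where Δ(ρ,H) = W(ρ,H) − W(ρ,0) is the work deficit at temperature T. Conversely, if ρ ∈ 𝔉 then no such H exists. -/
open Matrix ComplexOrder

noncomputable section

/-- A density matrix: positive semidefinite with unit trace. -/
def IsDensity {d : ℕ} (ρ : Matrix (Fin d) (Fin d) ℂ) : Prop :=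
  ρ.PosSemidef ∧ ρ.trace = 1

/-- Apply a real function to a Hermitian matrix via its spectral decomposition
(junk value `0` on non-Hermitian inputs). -/
def herFun {d : ℕ} (f : ℝ → ℝ) (A : Matrix (Fin d) (Fin d) ℂ) :
    Matrix (Fin d) (Fin d) ℂ :=
  if hA : A.IsHermitian then
    (hA.eigenvectorUnitary : Matrix (Fin d) (Fin d) ℂ) *
      Matrix.diagonal (fun i => (f (hA.eigenvalues i) : ℂ)) *
      star (hA.eigenvectorUnitary : Matrix (Fin d) (Fin d) ℂ)
  else 0

/-- Base-2 matrix logarithm of a Hermitian matrix (convention `log₂ 0 = 0` on the kernel,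
the standard convention for entropic quantities). -/
def matLog2 {d : ℕ} (A : Matrix (Fin d) (Fin d) ℂ) : Matrix (Fin d) (Fin d) ℂ :=
  herFun (Real.logb 2) A

/-- Von Neumann entropy in bits, `S₂(ρ) = −tr(ρ log₂ ρ)`. -/
def vnEnt2 {d : ℕ} (ρ : Matrix (Fin d) (Fin d) ℂ) : ℝ :=
  -((ρ * matLog2 ρ).trace.re)

/-- Base-2 quantum relative entropy `D(ρ‖σ) = tr(ρ(log₂ρ − log₂σ))`. -/
def relEnt2 {d : ℕ} (ρ σ : Matrix (Fin d) (Fin d) ℂ) : ℝ :=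
  ((ρ * (matLog2 ρ - matLog2 σ)).trace).re

/-- The (unnormalized) Boltzmann factor `e^{-H/(k_B T)}`. -/
def boltzmann {d : ℕ} (kB T : ℝ) (H : Matrix (Fin d) (Fin d) ℂ) :
    Matrix (Fin d) (Fin d) ℂ :=
  NormedSpace.exp (((-(1 / (kB * T)) : ℝ) : ℂ) • H)

/-- The Gibbs (thermal) state `γ = e^{-H/(k_B T)}/tr(e^{-H/(k_B T)})`. -/
def gibbs {d : ℕ} (kB T : ℝ) (H : Matrix (Fin d) (Fin d) ℂ) :
    Matrix (Fin d) (Fin d) ℂ :=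
  ((boltzmann kB T H).trace)⁻¹ • boltzmann kB T H

/-- The optimal extractable work `W(ρ,H) = (k_B T ln 2)·D(ρ‖γ)`. -/
def work {d : ℕ} (kB T : ℝ) (ρ H : Matrix (Fin d) (Fin d) ℂ) : ℝ :=
  kB * T * Real.log 2 * relEnt2 ρ (gibbs kB T H)

/-- Work extractable from the information content: `W_inf(ρ) = W(ρ,0) = (k_B T ln 2)·D(ρ‖I/d)`. -/
def workInf {d : ℕ} (kB T : ℝ) (ρ : Matrix (Fin d) (Fin d) ℂ) : ℝ :=
  kB * T * Real.log 2 * relEnt2 ρ (((d : ℂ))⁻¹ • (1 : Matrix (Fin d) (Fin d) ℂ))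

/-- The work deficit `Δ(ρ,H) = W(ρ,H) − W_inf(ρ)`. -/
def workDeficit {d : ℕ} (kB T : ℝ) (ρ H : Matrix (Fin d) (Fin d) ℂ) : ℝ :=
  work kB T ρ H - workInf kB T ρ


/-! ### Auxiliary lemmas -/

lemma ofReal_eqc : (RCLike.ofReal : ℝ → ℂ) = Complex.ofReal := rfl

section Aux

variable {d : ℕ} {A H : Matrix (Fin d) (Fin d) ℂ}

lemma herFun_eq (hA : A.IsHermitian) (f : ℝ → ℝ) :
    herFun f A = cfc f A := by
  rw [herFun, dif_pos hA, hA.cfc_eq]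
  rfl

lemma cfc_trace' (hA : A.IsHermitian) (f : ℝ → ℝ) :
    (hA.cfc f).trace = ∑ i, (f (hA.eigenvalues i) : ℂ) := by
  rw [Matrix.IsHermitian.cfc, Unitary.conjStarAlgAut_apply, Matrix.trace_mul_cycle,
    Unitary.star_mul_self_of_mem (SetLike.coe_mem _), one_mul, Matrix.trace_diagonal]
  rfl

lemma cfc_real_smul (hA : A.IsHermitian) (c : ℝ) (f : ℝ → ℝ) :
    (c : ℂ) • hA.cfc f = hA.cfc (fun x => c * f x) := by
  have h2 : (Matrix.diagonal (RCLike.ofReal ∘ (fun x => c * f x) ∘ hA.eigenvalues) :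
      Matrix (Fin d) (Fin d) ℂ)
      = (c : ℂ) • Matrix.diagonal (RCLike.ofReal ∘ f ∘ hA.eigenvalues) := by
    ext i j
    by_cases h : i = j <;>
      simp [h, Matrix.diagonal_apply, ofReal_eqc, Matrix.smul_apply]
  rw [Matrix.IsHermitian.cfc, Matrix.IsHermitian.cfc, Unitary.conjStarAlgAut_apply,
    Unitary.conjStarAlgAut_apply, h2, mul_smul_comm, smul_mul_assoc]

lemma cfc_affine (hA : A.IsHermitian) (a b : ℝ) :
    hA.cfc (fun x => a + b * x) = (a : ℂ) • (1 : Matrix (Fin d) (Fin d) ℂ) + (b : ℂ) • A := by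
  have h2 : (Matrix.diagonal (RCLike.ofReal ∘ (fun x => a + b * x) ∘ hA.eigenvalues) :
      Matrix (Fin d) (Fin d) ℂ)
      = (a : ℂ) • (1 : Matrix (Fin d) (Fin d) ℂ)
        + (b : ℂ) • Matrix.diagonal (RCLike.ofReal ∘ hA.eigenvalues) := by
    ext i j
    by_cases h : i = j <;>
      simp [h, Matrix.diagonal_apply, Matrix.one_apply, ofReal_eqc, Matrix.smul_apply,
        Matrix.add_apply]
  rw [Matrix.IsHermitian.cfc, Unitary.conjStarAlgAut_apply, h2, mul_add, add_mul, mul_smul_comm, smul_mul_assoc,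
    mul_smul_comm, smul_mul_assoc]
  congr 1
  · rw [mul_one, Unitary.mul_star_self_of_mem (SetLike.coe_mem _)]
  · congr 1
    exact hA.spectral_theorem.symm

lemma boltzmann_cfc (kB T : ℝ) (hH : H.IsHermitian) :
    boltzmann kB T H = hH.cfc (fun x => Real.exp (-(1 / (kB * T)) * x)) := by
  rw [boltzmann]
  have hUinv : (hH.eigenvectorUnitary : Matrix (Fin d) (Fin d) ℂ)⁻¹
      = star (hH.eigenvectorUnitary : Matrix (Fin d) (Fin d) ℂ) :=
    Matrix.inv_eq_left_inv (Unitary.star_mul_self_of_mem (SetLike.coe_mem _))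
  have hUunit : IsUnit (hH.eigenvectorUnitary : Matrix (Fin d) (Fin d) ℂ) := by
    apply (Matrix.isUnit_iff_isUnit_det _).mpr
    have h1 : star (hH.eigenvectorUnitary : Matrix (Fin d) (Fin d) ℂ) *
        (hH.eigenvectorUnitary : Matrix (Fin d) (Fin d) ℂ) = 1 :=
      Unitary.star_mul_self_of_mem (SetLike.coe_mem _)
    have h2 := congrArg Matrix.det h1
    rw [Matrix.det_mul, Matrix.det_one, mul_comm] at h2
    exact IsUnit.of_mul_eq_one _ h2
  have h2 : (Matrix.diagonal (fun i => ((-(1 / (kB * T)) * hH.eigenvalues i : ℝ) : ℂ)) :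
      Matrix (Fin d) (Fin d) ℂ)
      = ((-(1 / (kB * T)) : ℝ) : ℂ) • Matrix.diagonal (RCLike.ofReal ∘ hH.eigenvalues) := by
    ext i j
    by_cases h : i = j <;>
      simp [h, Matrix.diagonal_apply, ofReal_eqc, Matrix.smul_apply]
  have hsmul : ((-(1 / (kB * T)) : ℝ) : ℂ) • H
      = (hH.eigenvectorUnitary : Matrix (Fin d) (Fin d) ℂ) *
          Matrix.diagonal (fun i => ((-(1 / (kB * T)) * hH.eigenvalues i : ℝ) : ℂ)) *
          (hH.eigenvectorUnitary : Matrix (Fin d) (Fin d) ℂ)⁻¹ := by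
    rw [hUinv, h2, mul_smul_comm, smul_mul_assoc]
    congr 1
    exact hH.spectral_theorem
  have hexp : NormedSpace.exp (fun i => ((-(1 / (kB * T)) * hH.eigenvalues i : ℝ) : ℂ))
      = (RCLike.ofReal ∘ (fun x => Real.exp (-(1 / (kB * T)) * x)) ∘ hH.eigenvalues :
          Fin d → ℂ) := by
    rw [Pi.exp_def]
    funext i
    simp only [Function.comp_apply, ofReal_eqc]
    rw [← Complex.exp_eq_exp_ℂ, Complex.ofReal_exp]
  rw [hsmul, Matrix.exp_conj _ _ hUunit, Matrix.exp_diagonal, hexp, hUinv,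
    Matrix.IsHermitian.cfc, Unitary.conjStarAlgAut_apply]

lemma gibbs_cfc (kB T : ℝ) (hd : 0 < d) (hH : H.IsHermitian) :
    gibbs kB T H = hH.cfc (fun x =>
      (∑ j, Real.exp (-(1 / (kB * T)) * hH.eigenvalues j))⁻¹
        * Real.exp (-(1 / (kB * T)) * x)) := by
  have : Nonempty (Fin d) := ⟨⟨0, hd⟩⟩
  have hZ : 0 < ∑ j, Real.exp (-(1 / (kB * T)) * hH.eigenvalues j) :=
    Finset.sum_pos (fun j _ => Real.exp_pos _) Finset.univ_nonempty
  have htr : (boltzmann kB T H).trace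
      = ((∑ j, Real.exp (-(1 / (kB * T)) * hH.eigenvalues j) : ℝ) : ℂ) := by
    rw [boltzmann_cfc kB T hH, cfc_trace']
    push_cast
    rfl
  rw [gibbs, htr, boltzmann_cfc kB T hH, ← Complex.ofReal_inv, cfc_real_smul]

lemma gibbs_isHermitian (kB T : ℝ) (hd : 0 < d) (hH : H.IsHermitian) :
    (gibbs kB T H).IsHermitian := by
  rw [gibbs_cfc kB T hd hH, ← hH.cfc_eq]
  exact cfc_predicate _ H

lemma matLog2_gibbs (kB T : ℝ) (hd : 0 < d) (hH : H.IsHermitian) :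
    matLog2 (gibbs kB T H)
      = ((-Real.logb 2 (∑ j, Real.exp (-(1 / (kB * T)) * hH.eigenvalues j)) : ℝ) : ℂ)
          • (1 : Matrix (Fin d) (Fin d) ℂ)
        + ((-(1 / (kB * T)) / Real.log 2 : ℝ) : ℂ) • H := by
  have : Nonempty (Fin d) := ⟨⟨0, hd⟩⟩
  set Z := ∑ j, Real.exp (-(1 / (kB * T)) * hH.eigenvalues j) with hZdef
  have hZ : 0 < Z := Finset.sum_pos (fun j _ => Real.exp_pos _) Finset.univ_nonempty
  have hHsa : IsSelfAdjoint H := hH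
  have hcomp : cfc (Real.logb 2) (cfc (fun x => Z⁻¹ * Real.exp (-(1 / (kB * T)) * x)) H)
      = cfc ((Real.logb 2) ∘ (fun x => Z⁻¹ * Real.exp (-(1 / (kB * T)) * x))) H := by
    refine (cfc_comp (Real.logb 2) _ H hHsa ?_ (Continuous.continuousOn (by fun_prop))).symm
    refine Real.continuousOn_logb.mono ?_
    rintro y ⟨x, -, rfl⟩
    simp only [Set.mem_compl_iff, Set.mem_singleton_iff]
    exact ne_of_gt (mul_pos (inv_pos.mpr hZ) (Real.exp_pos _))
  have hfun : (Real.logb 2) ∘ (fun x => Z⁻¹ * Real.exp (-(1 / (kB * T)) * x))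
      = fun x => (-Real.logb 2 Z) + ((-(1 / (kB * T)) / Real.log 2)) * x := by
    funext x
    simp only [Function.comp_apply]
    rw [Real.logb_mul (by positivity) (ne_of_gt (Real.exp_pos _)), Real.logb_inv]
    simp only [Real.logb, Real.log_exp]
    ring
  rw [matLog2, herFun_eq (gibbs_isHermitian kB T hd hH), gibbs_cfc kB T hd hH, ← hZdef,
    ← hH.cfc_eq, hcomp, hfun, hH.cfc_eq]
  exact cfc_affine hH _ _

lemma unif_isHermitian (hd : 0 < d) :
    (((d : ℂ))⁻¹ • (1 : Matrix (Fin d) (Fin d) ℂ)).IsHermitian := by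
  show (((d : ℂ))⁻¹ • (1 : Matrix (Fin d) (Fin d) ℂ))ᴴ = _
  rw [Matrix.conjTranspose_smul, Matrix.conjTranspose_one]
  congr 1
  rw [star_inv₀]
  norm_cast

lemma unif_eq_algebraMap (hd : 0 < d) :
    ((d : ℂ))⁻¹ • (1 : Matrix (Fin d) (Fin d) ℂ)
      = algebraMap ℝ (Matrix (Fin d) (Fin d) ℂ) ((d : ℝ)⁻¹) := by
  rw [Algebra.algebraMap_eq_smul_one]
  ext i j
  simp only [Matrix.smul_apply, Complex.real_smul, smul_eq_mul]
  push_cast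
  ring

lemma matLog2_unif (hd : 0 < d) :
    matLog2 (((d : ℂ))⁻¹ • (1 : Matrix (Fin d) (Fin d) ℂ))
      = ((Real.logb 2 ((d : ℝ))⁻¹ : ℝ) : ℂ) • (1 : Matrix (Fin d) (Fin d) ℂ) := by
  rw [matLog2, herFun_eq (unif_isHermitian hd), unif_eq_algebraMap hd, cfc_algebraMap,
    Algebra.algebraMap_eq_smul_one]
  ext i j
  simp only [Matrix.smul_apply, Complex.real_smul, smul_eq_mul]

lemma workDeficit_formula (kB T : ℝ) (hkB : 0 < kB) (hT : 0 < T) (hd : 0 < d)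
    {ρ : Matrix (Fin d) (Fin d) ℂ} (hH : H.IsHermitian) (htr : ρ.trace = 1) :
    workDeficit kB T ρ H
      = kB * T * Real.log 2 *
          (Real.logb 2 (∑ j, Real.exp (-(1 / (kB * T)) * hH.eigenvalues j))
            - Real.logb 2 d)
        + ((ρ * H).trace).re := by
  set Z := ∑ j, Real.exp (-(1 / (kB * T)) * hH.eigenvalues j) with hZdef
  have hlog2 : (0 : ℝ) < Real.log 2 := Real.log_pos one_lt_two
  have htr1 : (ρ * (((Real.logb 2 ((d : ℝ))⁻¹ : ℝ) : ℂ) • (1 : Matrix (Fin d) (Fin d) ℂ))).trace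
      = ((Real.logb 2 ((d : ℝ))⁻¹ : ℝ) : ℂ) := by
    rw [mul_smul_comm, mul_one, Matrix.trace_smul, htr, smul_eq_mul, mul_one]
  have htr2 : (ρ * (((-Real.logb 2 Z : ℝ) : ℂ) • (1 : Matrix (Fin d) (Fin d) ℂ)
        + ((-(1 / (kB * T)) / Real.log 2 : ℝ) : ℂ) • H)).trace
      = ((-Real.logb 2 Z : ℝ) : ℂ)
        + ((-(1 / (kB * T)) / Real.log 2 : ℝ) : ℂ) * (ρ * H).trace := by
    rw [mul_add, Matrix.trace_add, mul_smul_comm, mul_one, Matrix.trace_smul, htr,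
      smul_eq_mul, mul_one, mul_smul_comm, Matrix.trace_smul, smul_eq_mul]
  rw [workDeficit, work, workInf, relEnt2, relEnt2, Matrix.mul_sub, Matrix.mul_sub,
    Matrix.trace_sub, Matrix.trace_sub, matLog2_gibbs kB T hd hH, ← hZdef,
    matLog2_unif hd, htr1, htr2]
  simp only [Complex.sub_re, Complex.add_re, Complex.ofReal_re, Complex.re_ofReal_mul]
  rw [Real.logb_inv]
  have hkT : kB * T ≠ 0 := by positivity
  field_simp
  ring

lemma exists_repr (f : Matrix (Fin d) (Fin d) ℂ →L[ℝ] ℝ) :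
    ∃ B : Matrix (Fin d) (Fin d) ℂ, ∀ X, ((X * B).trace).re = f X := by
  set B : Matrix (Fin d) (Fin d) ℂ := Matrix.of (fun j i =>
      ((f (Matrix.single i j 1) : ℝ) : ℂ)
      - ((f (Matrix.single i j Complex.I) : ℝ) : ℂ) * Complex.I) with hBdef
  refine ⟨B, fun X => ?_⟩
  have h1 : ((X * B).trace).re = ∑ i, ∑ j, ((X i j) *
      (((f (Matrix.single i j 1) : ℝ) : ℂ)
        - ((f (Matrix.single i j Complex.I) : ℝ) : ℂ) * Complex.I)).re := by
    rw [Matrix.trace]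
    simp only [Matrix.diag_apply, Matrix.mul_apply, hBdef, Matrix.of_apply]
    rw [Complex.re_sum]
    exact Finset.sum_congr rfl fun i _ => Complex.re_sum _ _
  rw [h1]
  have h2 : f X = ∑ i, ∑ j, f (Matrix.single i j (X i j)) := by
    conv_lhs => rw [Matrix.matrix_eq_sum_single X]
    rw [map_sum]
    exact Finset.sum_congr rfl fun i _ => map_sum f _ _
  rw [h2]
  refine Finset.sum_congr rfl fun i _ => Finset.sum_congr rfl fun j _ => ?_
  have h3 : Matrix.single i j (X i j)
      = (X i j).re • Matrix.single i j (1 : ℂ)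
        + (X i j).im • Matrix.single i j Complex.I := by
    rw [Matrix.smul_single, Matrix.smul_single, ← Matrix.single_add]
    congr 1
    simp [Complex.real_smul, Complex.ext_iff]
  rw [h3, map_add, f.map_smul, f.map_smul]
  simp only [smul_eq_mul, Complex.mul_re, Complex.sub_re, Complex.sub_im, Complex.mul_re,
    Complex.mul_im, Complex.I_re, Complex.I_im, Complex.ofReal_re, Complex.ofReal_im]
  ring

lemma herm_part_isHermitian (B : Matrix (Fin d) (Fin d) ℂ) :
    ((2 : ℂ)⁻¹ • (B + Bᴴ)).IsHermitian := by
  show ((2 : ℂ)⁻¹ • (B + Bᴴ))ᴴ = _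
  rw [Matrix.conjTranspose_smul, Matrix.conjTranspose_add, Matrix.conjTranspose_conjTranspose]
  rw [add_comm]
  congr 1
  rw [star_inv₀]
  norm_num

lemma re_trace_herm_part (B : Matrix (Fin d) (Fin d) ℂ) {X : Matrix (Fin d) (Fin d) ℂ}
    (hX : X.IsHermitian) :
    ((X * ((2 : ℂ)⁻¹ • (B + Bᴴ))).trace).re = ((X * B).trace).re := by
  have h1 : (X * Bᴴ).trace = star ((X * B).trace) := by
    have h0 : (X * Bᴴ) = (B * X)ᴴ := by
      rw [Matrix.conjTranspose_mul, hX.eq]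
    rw [h0, Matrix.trace_conjTranspose, Matrix.trace_mul_comm]
  rw [mul_smul_comm, Matrix.trace_smul, Matrix.mul_add, Matrix.trace_add, h1, smul_eq_mul]
  have h2 : (X * B).trace + star ((X * B).trace)
      = (2 : ℂ) * ((((X * B).trace).re : ℝ) : ℂ) := by
    rw [show star ((X * B).trace) = (starRingEnd ℂ) ((X * B).trace) from rfl,
      Complex.add_conj]
    push_cast
    ring
  rw [h2]
  rw [← mul_assoc, inv_mul_cancel₀ (by norm_num : (2:ℂ) ≠ 0), one_mul, Complex.ofReal_re]

lemma shift_psd {A : Matrix (Fin d) (Fin d) ℂ} (hA : A.IsHermitian) (hd : 0 < d) :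
    ∃ c : ℝ, (A + ((c : ℝ) : ℂ) • (1 : Matrix (Fin d) (Fin d) ℂ)).PosSemidef := by
  have hne : Nonempty (Fin d) := ⟨⟨0, hd⟩⟩
  set c := Finset.univ.sup' Finset.univ_nonempty (fun i => -hA.eigenvalues i) with hc
  refine ⟨c, ?_⟩
  have hsc : ((c : ℝ) : ℂ) • (1 : Matrix (Fin d) (Fin d) ℂ)
      = (hA.eigenvectorUnitary : Matrix (Fin d) (Fin d) ℂ) *
          (((c : ℝ) : ℂ) • (1 : Matrix (Fin d) (Fin d) ℂ)) *
          star (hA.eigenvectorUnitary : Matrix (Fin d) (Fin d) ℂ) := by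
    rw [mul_smul_comm, smul_mul_assoc, mul_one,
      Unitary.mul_star_self_of_mem (SetLike.coe_mem _)]
  have hdiag : Matrix.diagonal (RCLike.ofReal ∘ hA.eigenvalues)
        + ((c : ℝ) : ℂ) • (1 : Matrix (Fin d) (Fin d) ℂ)
      = Matrix.diagonal (fun i => ((hA.eigenvalues i + c : ℝ) : ℂ)) := by
    ext i j
    by_cases h : i = j <;>
      simp [h, Matrix.diagonal_apply, Matrix.one_apply, ofReal_eqc, Matrix.smul_apply,
        Matrix.add_apply]
  have hdecomp : A + ((c : ℝ) : ℂ) • (1 : Matrix (Fin d) (Fin d) ℂ)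
      = (hA.eigenvectorUnitary : Matrix (Fin d) (Fin d) ℂ) *
          Matrix.diagonal (fun i => ((hA.eigenvalues i + c : ℝ) : ℂ)) *
          (hA.eigenvectorUnitary : Matrix (Fin d) (Fin d) ℂ)ᴴ := by
    rw [← Matrix.star_eq_conjTranspose]
    conv_lhs => rw [hA.spectral_theorem, Unitary.conjStarAlgAut_apply, hsc]
    rw [← add_mul, ← mul_add, hdiag]
  rw [hdecomp]
  apply Matrix.PosSemidef.mul_mul_conjTranspose_same
  refine Matrix.posSemidef_diagonal_iff.mpr fun i => ?_
  rw [Complex.zero_le_real]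
  have := Finset.le_sup' (fun i => -hA.eigenvalues i) (Finset.mem_univ i)
  rw [← hc] at this
  linarith

end Aux

/-- Corollary 2 of the paper: for a convex compact set `𝔉` of density
matrices and a density matrix `ρ`, at any temperature `T > 0`, `ρ ∉ 𝔉` if and only if
some positive semidefinite Hamiltonian `H ≥ 0` gives `Δ(ρ,H) > max_{η∈𝔉} Δ(η,H)`. -/
theorem state_resource_certification_by_work {d : ℕ} (kB T : ℝ)
    (hkB : 0 < kB) (hT : 0 < T) {F : Set (Matrix (Fin d) (Fin d) ℂ)}
    (hF : ∀ η ∈ F, IsDensity η) (hconv : Convex ℝ F) (hcomp : IsCompact F)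
    {ρ : Matrix (Fin d) (Fin d) ℂ} (hρ : IsDensity ρ) :
    ρ ∉ F ↔
      ∃ H : Matrix (Fin d) (Fin d) ℂ, H.PosSemidef ∧
        ∀ η ∈ F, workDeficit kB T η H < workDeficit kB T ρ H := by
  have hd : 0 < d := by
    rcases Nat.eq_zero_or_pos d with h0 | h
    · exact absurd hρ.2 (by subst h0; simp [Matrix.trace])
    · exact h
  constructor
  · intro hnot
    have hlc : LocallyConvexSpace ℝ (Matrix (Fin d) (Fin d) ℂ) :=
      (Pi.locallyConvexSpace : LocallyConvexSpace ℝ (Fin d → Fin d → ℂ))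
    obtain ⟨f, u, hfρ, hfF⟩ := geometric_hahn_banach_point_closed hconv hcomp.isClosed hnot
    obtain ⟨B, hB⟩ := exists_repr (-f)
    have hA : ((2 : ℂ)⁻¹ • (B + Bᴴ)).IsHermitian := herm_part_isHermitian B
    obtain ⟨c, hpsd⟩ := shift_psd hA hd
    set A : Matrix (Fin d) (Fin d) ℂ := (2 : ℂ)⁻¹ • (B + Bᴴ) with hAdef
    refine ⟨A + ((c : ℝ) : ℂ) • 1, hpsd, fun η hη => ?_⟩
    have hHisH : (A + ((c : ℝ) : ℂ) • (1 : Matrix (Fin d) (Fin d) ℂ)).IsHermitian := hpsd.1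
    have key : ∀ X : Matrix (Fin d) (Fin d) ℂ, X.IsHermitian → X.trace = 1 →
        ((X * (A + ((c : ℝ) : ℂ) • 1)).trace).re = (-f) X + c := by
      intro X hX hXtr
      rw [Matrix.mul_add, Matrix.trace_add, Complex.add_re]
      congr 1
      · rw [hAdef, re_trace_herm_part B hX, hB]
      · rw [mul_smul_comm, mul_one, Matrix.trace_smul, hXtr, smul_eq_mul, mul_one,
          Complex.ofReal_re]
    rw [workDeficit_formula kB T hkB hT hd hHisH (hF η hη).2,
      workDeficit_formula kB T hkB hT hd hHisH hρ.2,
      key η (hF η hη).1.1 (hF η hη).2, key ρ hρ.1.1 hρ.2]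
    have h1 : f ρ < u := hfρ
    have h2 : u < f η := hfF η hη
    have h3 : (-f) η < (-f) ρ := by
      simp only [ContinuousLinearMap.neg_apply]
      linarith
    linarith
  · rintro ⟨H, hHpsd, hlt⟩ hmem
    exact lt_irrefl _ (hlt ρ hmem)
end
end

section
/- A measurement assemblage {M_{a|x}} is compatible (jointly measurable) if and only if the state assemblage {M_{a|x}ᵀ/d}_{a,x} induced by measuring the maximally entangled state admits a local hidden-state model. -/
open Matrix ComplexOrder

noncomputable section

/-- A state assemblage on a `d`-dimensional system `B`, with `nA` outcomes and `nX`
measurement settings: positive semidefinite operators with no-signalling marginals of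
unit trace. -/
def IsAssemblage {d nA nX : ℕ} (A : Fin nA → Fin nX → Matrix (Fin d) (Fin d) ℂ) : Prop :=
  (∀ a x, (A a x).PosSemidef) ∧
  (∀ x x', ∑ a, A a x = ∑ a, A a x') ∧
  (∀ x, (∑ a, A a x).trace = 1)

/-- An assemblage admits a local hidden-state (LHS) model if
`A_{a|x} = Σ_λ P(a|x,λ) P(λ) ρ_λ` for some finite hidden variable `λ`, probability
distribution `P(λ)`, conditional distributions `P(a|x,λ)` and density matrices `ρ_λ`. -/
def IsLHS {d nA nX : ℕ} (A : Fin nA → Fin nX → Matrix (Fin d) (Fin d) ℂ) : Prop :=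
  ∃ (nL : ℕ) (p : Fin nL → ℝ) (P : Fin nA → Fin nX → Fin nL → ℝ)
    (ρ : Fin nL → Matrix (Fin d) (Fin d) ℂ),
    (∀ l, 0 ≤ p l) ∧ (∑ l, p l = 1) ∧
    (∀ a x l, 0 ≤ P a x l) ∧ (∀ x l, ∑ a, P a x l = 1) ∧
    (∀ l, IsDensity (ρ l)) ∧
    (∀ a x, A a x = ∑ l, ((P a x l * p l : ℝ) : ℂ) • ρ l)

/-- `LHSof A`: the LHS assemblages reproducing the outcome statistics of `A`. -/
def LHSof {d nA nX : ℕ} (A : Fin nA → Fin nX → Matrix (Fin d) (Fin d) ℂ) :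
    Set (Fin nA → Fin nX → Matrix (Fin d) (Fin d) ℂ) :=
  {B | IsLHS B ∧ ∀ a x, (B a x).trace = (A a x).trace}

/-- A measurement assemblage `{M_{a|x}}` is compatible (jointly measurable) if it is
simulable from a single parent POVM `{G_λ}` via classical post-processing
`M_{a|x} = Σ_λ P(a|x,λ) G_λ`. -/
def Compatible {d nA nX : ℕ} (M : Fin nA → Fin nX → Matrix (Fin d) (Fin d) ℂ) : Prop :=
  ∃ (nL : ℕ) (G : Fin nL → Matrix (Fin d) (Fin d) ℂ)
    (P : Fin nA → Fin nX → Fin nL → ℝ),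
    (∀ l, (G l).PosSemidef) ∧ (∑ l, G l = 1) ∧
    (∀ a x l, 0 ≤ P a x l) ∧ (∀ x l, ∑ a, P a x l = 1) ∧
    (∀ a x, M a x = ∑ l, ((P a x l : ℝ) : ℂ) • G l)

lemma smulPSD {d : ℕ} {r : ℝ} (hr : 0 ≤ r) {M : Matrix (Fin d) (Fin d) ℂ}
    (hM : M.PosSemidef) : ((r : ℂ) • M).PosSemidef := by
  constructor
  · simp [Matrix.IsHermitian, conjTranspose_smul, Complex.star_def, Complex.conj_ofReal, hM.1.eq]
  · exact (hM.smul (a := (r : ℂ)) (by exact_mod_cast hr)).2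

lemma psd_trace_nonneg {d : ℕ} {M : Matrix (Fin d) (Fin d) ℂ} (hM : M.PosSemidef) :
    0 ≤ M.trace := by
  have hdiag : ∀ i, (0:ℂ) ≤ M i i := by
    intro i
    exact hM.diag_nonneg
  exact Finset.sum_nonneg fun i _ => hdiag i

lemma psd_trace_zero {d : ℕ} {M : Matrix (Fin d) (Fin d) ℂ} (hM : M.PosSemidef)
    (h : M.trace = 0) : M = 0 := by
  exact hM.trace_eq_zero_iff.mp h

/-- `{M_{a|x}}` is compatible if and only if the state assemblage
`{M_{a|x}ᵀ/d}` induced by measuring it on half of a maximally entangled state admits a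
local hidden-state model. -/
theorem compatible_iff_maxEnt_assemblage_isLHS {d nA nX : ℕ} (hd : 0 < d)
    (M : Fin nA → Fin nX → Matrix (Fin d) (Fin d) ℂ)
    (hM : ∀ a x, (M a x).PosSemidef) (hM1 : ∀ x, ∑ a, M a x = 1) :
    Compatible M ↔ IsLHS (fun a x => ((d : ℂ))⁻¹ • (M a x)ᵀ) := by
  have hd0 : (d : ℝ) ≠ 0 := Nat.cast_ne_zero.mpr hd.ne'
  have hdC : (d : ℂ) ≠ 0 := Nat.cast_ne_zero.mpr hd.ne'
  have hmaxDens : IsDensity ((d : ℂ)⁻¹ • (1 : Matrix (Fin d) (Fin d) ℂ)) := by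
    constructor
    · have : ((d : ℂ))⁻¹ = (((d : ℝ)⁻¹ : ℝ) : ℂ) := by push_cast; ring
      rw [this]
      exact smulPSD (by positivity) Matrix.PosSemidef.one
    · simp [Matrix.trace_smul, Matrix.trace_one]
      field_simp
  constructor
  · rintro ⟨nL, G, P, hG, hG1, hP0, hP1, hMG⟩
    set t : Fin nL → ℂ := fun l => (G l).trace with ht
    have htnn : ∀ l, 0 ≤ t l := fun l => psd_trace_nonneg (hG l)
    have htre : ∀ l, t l = ((t l).re : ℂ) := by
      intro l
      have := (Complex.le_def.mp (htnn l)).2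
      apply Complex.ext <;> simp [this.symm]
    have htre0 : ∀ l, 0 ≤ (t l).re := fun l => (Complex.le_def.mp (htnn l)).1
    have hsumt : ∑ l, t l = (d : ℂ) := by
      rw [ht]
      simp only [← Matrix.trace_sum, hG1, Matrix.trace_one]
      simp
    refine ⟨nL, fun l => (t l).re / d, P,
      fun l => if h : t l = 0 then (d : ℂ)⁻¹ • 1 else (t l)⁻¹ • (G l)ᵀ,
      fun l => div_nonneg (htre0 l) (Nat.cast_nonneg d), ?_, hP0, hP1, ?_, ?_⟩
    · rw [← Finset.sum_div]
      have : ∑ l, (t l).re = (d : ℝ) := by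
        have := congrArg Complex.re hsumt
        simpa [Complex.re_sum] using this
      rw [this]; field_simp
    · intro l
      by_cases h : t l = 0
      · simp only [h, dif_pos]; exact hmaxDens
      · simp only [dif_neg h]
        have hre : (t l).re ≠ 0 := by
          intro h0; exact h (by rw [htre l, h0]; simp)
        constructor
        · have hinv : (t l)⁻¹ = ((((t l).re)⁻¹ : ℝ) : ℂ) := by
            conv_lhs => rw [htre l]
            push_cast
            ring
          rw [hinv]
          exact smulPSD (inv_nonneg.mpr (htre0 l)) (hG l).transpose
        · rw [Matrix.trace_smul, Matrix.trace_transpose, smul_eq_mul, inv_mul_cancel₀ h]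
    · intro a x
      simp only
      rw [hMG a x, Matrix.transpose_sum, Finset.smul_sum]
      refine Finset.sum_congr rfl fun l _ => ?_
      by_cases h : t l = 0
      · have hG0 : G l = 0 := psd_trace_zero (hG l) h
        have hre : (t l).re = 0 := by rw [h]; simp
        simp [hG0, hre, h]
      · simp only [dif_neg h]
        have hre : (t l).re ≠ 0 := by
          intro h0; exact h (by rw [htre l, h0]; simp)
        have hinv : (t l)⁻¹ = ((((t l).re)⁻¹ : ℝ) : ℂ) := by
          conv_lhs => rw [htre l]
          push_cast
          ring
        rw [Matrix.transpose_smul, smul_smul, smul_smul, hinv]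
        congr 1
        push_cast
        field_simp
  · rintro ⟨nL, p, P, ρ, hp0, hp1, hP0, hP1, hρ, hA⟩
    rcases Nat.eq_zero_or_pos nX with hX | hX
    · subst hX
      exact ⟨1, fun _ => 1, fun _ x _ => x.elim0, fun _ => Matrix.PosSemidef.one,
        by simp, fun _ x _ => x.elim0, fun x _ => x.elim0, fun _ x => x.elim0⟩
    · obtain ⟨x0⟩ : Nonempty (Fin nX) := ⟨⟨0, hX⟩⟩
      have hmarg : ∑ l, ((p l : ℝ) : ℂ) • ρ l = (d : ℂ)⁻¹ • (1 : Matrix (Fin d) (Fin d) ℂ) := by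
        have h1 : ∑ a, ((d : ℂ)⁻¹ • (M a x0)ᵀ) = (d : ℂ)⁻¹ • (1 : Matrix (Fin d) (Fin d) ℂ) := by
          rw [← Finset.smul_sum, ← Matrix.transpose_sum, hM1 x0, Matrix.transpose_one]
        have h2 : ∑ a, ((d : ℂ)⁻¹ • (M a x0)ᵀ) = ∑ l, ((p l : ℝ) : ℂ) • ρ l := by
          calc ∑ a, ((d : ℂ)⁻¹ • (M a x0)ᵀ)
              = ∑ a, ∑ l, ((P a x0 l * p l : ℝ) : ℂ) • ρ l := by
                refine Finset.sum_congr rfl fun a _ => hA a x0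
            _ = ∑ l, ∑ a, ((P a x0 l * p l : ℝ) : ℂ) • ρ l := Finset.sum_comm
            _ = ∑ l, ((p l : ℝ) : ℂ) • ρ l := by
                refine Finset.sum_congr rfl fun l _ => ?_
                rw [← Finset.sum_smul]
                congr 1
                rw [← Complex.ofReal_sum]
                norm_cast
                rw [← Finset.sum_mul, hP1 x0 l, one_mul]
        rw [← h2, h1]
      refine ⟨nL, fun l => (((d : ℝ) * p l : ℝ) : ℂ) • (ρ l)ᵀ, P,
        fun l => smulPSD (mul_nonneg (Nat.cast_nonneg d) (hp0 l)) (hρ l).1.transpose,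
        ?_, hP0, hP1, ?_⟩
      · have := congrArg (fun X => (d : ℂ) • Matrix.transpose X) hmarg
        simp only [Matrix.transpose_sum, Matrix.transpose_smul, Finset.smul_sum,
          Matrix.transpose_one, smul_smul] at this
        rw [mul_inv_cancel₀ hdC, one_smul] at this
        simp only [Complex.ofReal_mul, Complex.ofReal_natCast]
        rw [← this]
      · intro a x
        have h := hA a x
        simp only at h
        have := congrArg (fun X => (d : ℂ) • Matrix.transpose X) h
        simp only [Matrix.transpose_sum, Matrix.transpose_smul, Finset.smul_sum,
          Matrix.transpose_transpose, smul_smul] at this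
        rw [mul_inv_cancel₀ hdC, one_smul] at this
        rw [this]
        simp only [Complex.ofReal_mul, Complex.ofReal_natCast, smul_smul]
        refine Finset.sum_congr rfl fun l _ => ?_
        congr 1
        ring
end
end
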